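/- Let U ⊆ O_K^{*,+} be an admissible subgroup and let Γ = U ⋉ O_K act on ℍ^s × ℂ^t by (u,a)·(z₁,…,z_{s+t}) = (σ₁(u)z₁+σ₁(a),…,σ_{s+t}(u)z_{s+t}+σ_{s+t}(a)). Then the quotient topological space (ℍ^s × ℂ^t)/Γ (the orbit space with the quotient topology) is compact. -/

import Mathlib

/-!
Setting: `K` is a number field with exactly `s ≥ 1` real embeddings
`σr 0, …, σr (s-1) : K →+* ℝ` and `2t ≥ 2` complex (non-real) embeddings, of which
`σc 0, …, σc (t-1) : K →+* ℂ` are pairwise non-conjugate representatives.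
-/

noncomputable section
open NumberField

/-- The subgroup `O_K^{*,+}` of totally positive units: units `u` of the ring of integers
with `σᵢ(u) > 0` for every real embedding `σᵢ`, `i = 1, …, s`. -/
def posUnits (K : Type) [Field K] [NumberField K] {s : ℕ}
    (σr : Fin s → (K →+* ℝ)) : Subgroup (𝓞 K)ˣ where
  carrier := {u | ∀ i, 0 < σr i ((u : 𝓞 K) : K)}
  mul_mem' := by
    intro a b ha hb i
    push_cast [map_mul]
    exact mul_pos (ha i) (hb i)
  one_mem' := by intro i; simp
  inv_mem' := by
    intro a ha i
    have h1 : σr i ((↑(a⁻¹ * a) : 𝓞 K) : K) = 1 := by simp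
    have h2 : σr i ((↑(a⁻¹) : 𝓞 K) : K) * σr i ((↑a : 𝓞 K) : K) = 1 := by
      rw [← h1]; push_cast [map_mul]; ring
    nlinarith [ha i, h2]

/-- A subset of `ℝⁿ` is a lattice if it is discrete and its `ℝ`-linear span is all of `ℝⁿ`. -/
def IsLatticeSet {n : ℕ} (S : Set (Fin n → ℝ)) : Prop :=
  DiscreteTopology S ∧ Submodule.span ℝ S = ⊤

/-- The projection of the logarithmic embedding `l` to the first `s` coordinates:
`u ↦ (log |σ₁(u)|, …, log |σ_s(u)|)`. -/
def projLog {K : Type} [Field K] [NumberField K] {s : ℕ}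
    (σr : Fin s → (K →+* ℝ)) (u : (𝓞 K)ˣ) : Fin s → ℝ :=
  fun i => Real.log |σr i ((u : 𝓞 K) : K)|

/-- The logarithmic embedding
`l(u) = (log|σ₁(u)|, …, log|σ_s(u)|, 2 log|σ_{s+1}(u)|, …, 2 log|σ_{s+t}(u)|)`. -/
def logEmb {K : Type} [Field K] [NumberField K] {s t : ℕ}
    (σr : Fin s → (K →+* ℝ)) (σc : Fin t → (K →+* ℂ)) (u : (𝓞 K)ˣ) :
    Fin (s + t) → ℝ :=
  Fin.append (fun i => Real.log |σr i ((u : 𝓞 K) : K)|)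
    (fun j => 2 * Real.log ‖σc j ((u : 𝓞 K) : K)‖)

/-- A subgroup `U ⊆ O_K^{*,+}` is admissible if it is free abelian of rank `s` and the
projection of `l(U)` to the first `s` coordinates is a lattice in `ℝˢ`. -/
def Admissible {K : Type} [Field K] [NumberField K] {s : ℕ}
    (σr : Fin s → (K →+* ℝ)) (U : Subgroup (𝓞 K)ˣ) : Prop :=
  U ≤ posUnits K σr ∧ Nonempty (U ≃* Multiplicative (Fin s → ℤ)) ∧
    IsLatticeSet (projLog σr '' (U : Set (𝓞 K)ˣ))

/-- The affine action of a pair `(u, a) ∈ O_K^{*,+} ⋉ O_K` on `ℂˢ × ℂᵗ`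
(restricting to `ℍˢ × ℂᵗ`): `(u,a)·z = (σᵢ(u) zᵢ + σᵢ(a))ᵢ`. -/
def otAct {K : Type} [Field K] [NumberField K] {s t : ℕ}
    (σr : Fin s → (K →+* ℝ)) (σc : Fin t → (K →+* ℂ))
    (g : (𝓞 K)ˣ × 𝓞 K) (z : (Fin s → ℂ) × (Fin t → ℂ)) :
    (Fin s → ℂ) × (Fin t → ℂ) :=
  (fun i => (σr i ((g.1 : 𝓞 K) : K) : ℂ) * z.1 i + (σr i (g.2 : K) : ℂ),
   fun j => σc j ((g.1 : 𝓞 K) : K) * z.2 j + σc j (g.2 : K))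

/-- The hyperplane `L = {x ∈ ℝᵐ : ∑ xᵢ = 0}` as a submodule of `ℝᵐ`. -/
def sumZero (m : ℕ) : Submodule ℝ (Fin m → ℝ) where
  carrier := {x | ∑ i, x i = 0}
  add_mem' := by intro a b ha hb; simp_all [Finset.sum_add_distrib]
  zero_mem' := by simp
  smul_mem' := by intro c x hx; simp_all [← Finset.mul_sum]

section OTAux

open NumberField NumberField.InfinitePlace

variable {K : Type} [Field K] [NumberField K] {s t : ℕ}

lemma unit_coe_ne_zero (u : (𝓞 K)ˣ) : ((u : 𝓞 K) : K) ≠ 0 := by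
  have h : (u : 𝓞 K) ≠ 0 := u.ne_zero
  exact fun hc => h (RingOfIntegers.coe_eq_zero_iff.mp hc)

lemma projLog_one (σr : Fin s → (K →+* ℝ)) : projLog σr 1 = 0 := by
  funext i; simp [projLog]

lemma projLog_mul (σr : Fin s → (K →+* ℝ)) (u v : (𝓞 K)ˣ) :
    projLog σr (u * v) = projLog σr u + projLog σr v := by
  funext i
  have hcoe : (((u * v : (𝓞 K)ˣ) : 𝓞 K) : K) = ((u : 𝓞 K) : K) * ((v : 𝓞 K) : K) := by
    push_cast; ring
  have hu : σr i ((u : 𝓞 K) : K) ≠ 0 := by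
    simpa using (map_ne_zero (σr i)).mpr (unit_coe_ne_zero u)
  have hv : σr i ((v : 𝓞 K) : K) ≠ 0 := by
    simpa using (map_ne_zero (σr i)).mpr (unit_coe_ne_zero v)
  simp only [projLog, Pi.add_apply, hcoe, map_mul, abs_mul]
  exact Real.log_mul (abs_ne_zero.mpr hu) (abs_ne_zero.mpr hv)

lemma projLog_inv (σr : Fin s → (K →+* ℝ)) (u : (𝓞 K)ˣ) :
    projLog σr u⁻¹ = - projLog σr u := by
  funext i
  have hcoe : (((u⁻¹ : (𝓞 K)ˣ) : 𝓞 K) : K) * ((u : 𝓞 K) : K) = 1 := by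
    have : ((u⁻¹ : (𝓞 K)ˣ) : 𝓞 K) * (u : 𝓞 K) = 1 := u.inv_mul
    calc (((u⁻¹ : (𝓞 K)ˣ) : 𝓞 K) : K) * ((u : 𝓞 K) : K)
        = ((((u⁻¹ : (𝓞 K)ˣ) : 𝓞 K) * (u : 𝓞 K) : 𝓞 K) : K) := by push_cast; ring
      _ = 1 := by rw [this]; simp
  have h2 : σr i (((u⁻¹ : (𝓞 K)ˣ) : 𝓞 K) : K) * σr i ((u : 𝓞 K) : K) = 1 := by
    rw [← map_mul, hcoe, map_one]
  have h3 : σr i (((u⁻¹ : (𝓞 K)ˣ) : 𝓞 K) : K) = (σr i ((u : 𝓞 K) : K))⁻¹ :=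
    eq_inv_of_mul_eq_one_left h2
  simp only [projLog, Pi.neg_apply, h3, abs_inv, Real.log_inv]

lemma exists_realPlacesEquiv (σr : Fin s → (K →+* ℝ)) (hσr : Function.Bijective σr) :
    ∃ e : Fin s ≃ {w : InfinitePlace K // IsReal w},
      ∀ i, embedding_of_isReal (e i).2 = σr i := by
  have hreal : ∀ i, ComplexEmbedding.IsReal (Complex.ofRealHom.comp (σr i) : K →+* ℂ) := by
    intro i
    rw [ComplexEmbedding.isReal_iff]
    ext x
    simp [ComplexEmbedding.conjugate_coe_eq, Complex.conj_ofReal]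
  set f : Fin s → {w : InfinitePlace K // IsReal w} := fun i =>
    ⟨mk (Complex.ofRealHom.comp (σr i)), isReal_mk_iff.mpr (hreal i)⟩ with hf
  have hkey : ∀ i, embedding_of_isReal (f i).2 = σr i := by
    intro i
    have h1 : embedding ((f i) : InfinitePlace K) = Complex.ofRealHom.comp (σr i) :=
      embedding_mk_eq_of_isReal (hreal i)
    ext x
    have h2 := embedding_of_isReal_apply (f i).2 x
    rw [h1] at h2
    exact Complex.ofReal_injective (by simpa using h2)
  have hinj : Function.Injective f := by
    intro i k h
    have h2 : mk (Complex.ofRealHom.comp (σr i)) = mk (Complex.ofRealHom.comp (σr k)) :=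
      congrArg Subtype.val h
    have h3 : Complex.ofRealHom.comp (σr i) = Complex.ofRealHom.comp (σr k) := by
      rcases mk_eq_iff.mp h2 with h' | h'
      · exact h'
      · rw [ComplexEmbedding.isReal_iff.mp (hreal i)] at h'; exact h'
    apply hσr.1
    ext x
    have h4 := congrArg (fun g : K →+* ℂ => g x) h3
    simpa using h4
  have hsurj : Function.Surjective f := by
    intro w
    obtain ⟨i, hi⟩ := hσr.2 (embedding_of_isReal w.2)
    refine ⟨i, Subtype.ext ?_⟩
    show mk (Complex.ofRealHom.comp (σr i)) = w.1
    have h5 : Complex.ofRealHom.comp (σr i) = embedding w.1 := by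
      ext x
      simp only [RingHom.coe_comp, Function.comp_apply, Complex.ofRealHom_eq_coe, hi]
      exact embedding_of_isReal_apply w.2 x
    rw [h5, mk_embedding]
  exact ⟨Equiv.ofBijective f ⟨hinj, hsurj⟩, hkey⟩

lemma exists_complexPlacesEquiv (σc : Fin t → (K →+* ℂ)) (hσc : Function.Injective σc)
    (hσc_nonreal : ∀ j, ¬ ComplexEmbedding.IsReal (σc j))
    (hσc_nonconj : ∀ j k, ComplexEmbedding.conjugate (σc j) ≠ σc k)
    (hσc_exh : ∀ φ : K →+* ℂ, ¬ ComplexEmbedding.IsReal φ →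
      ∃ j, σc j = φ ∨ ComplexEmbedding.conjugate (σc j) = φ) :
    ∃ e : Fin t ≃ {w : InfinitePlace K // IsComplex w},
      ∀ j, embedding (e j).1 = σc j ∨ embedding (e j).1 = ComplexEmbedding.conjugate (σc j) := by
  set f : Fin t → {w : InfinitePlace K // IsComplex w} := fun j =>
    ⟨mk (σc j), isComplex_mk_iff.mpr (hσc_nonreal j)⟩ with hf
  have hkey : ∀ j, embedding (f j).1 = σc j ∨
      embedding (f j).1 = ComplexEmbedding.conjugate (σc j) := fun j => embedding_mk_eq (σc j)
  have hinj : Function.Injective f := by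
    intro j k h
    have h2 : mk (σc j) = mk (σc k) := congrArg Subtype.val h
    rcases mk_eq_iff.mp h2 with h' | h'
    · exact hσc h'
    · exact absurd h' (hσc_nonconj j k)
  have hsurj : Function.Surjective f := by
    intro w
    obtain ⟨j, hj⟩ := hσc_exh (embedding w.1) (isComplex_iff.mp w.2)
    refine ⟨j, Subtype.ext ?_⟩
    show mk (σc j) = w.1
    rcases hj with h' | h'
    · rw [h', mk_embedding]
    · rw [← mk_conjugate_eq, h', mk_embedding]
  exact ⟨Equiv.ofBijective f ⟨hinj, hsurj⟩, hkey⟩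

open Classical in
/-- The linear map from the mixed space to `ℝˢ × ℂᵗ` induced by `er`, `ec`, using
conjugation where the chosen embedding of a complex place differs from `σc j`. -/
def mixedToStd (σc : Fin t → (K →+* ℂ))
    (er : Fin s ≃ {w : InfinitePlace K // IsReal w})
    (ec : Fin t ≃ {w : InfinitePlace K // IsComplex w}) :
    NumberField.mixedEmbedding.mixedSpace K →ₗ[ℝ] ((Fin s → ℝ) × (Fin t → ℂ)) where
  toFun x := (fun i => x.1 (er i), fun j =>
    if embedding (ec j).1 = σc j then x.2 (ec j) else (starRingEnd ℂ) (x.2 (ec j)))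
  map_add' x y := by
    refine Prod.ext ?_ ?_ <;> funext k <;>
      simp only [Prod.fst_add, Prod.snd_add, Pi.add_apply, map_add] <;> split_ifs <;> simp
  map_smul' c x := by
    refine Prod.ext ?_ ?_ <;> funext k <;>
      simp only [Prod.smul_fst, Prod.smul_snd, Pi.smul_apply, RingHom.id_apply] <;>
      split_ifs <;> simp [Complex.real_smul, map_mul, Complex.conj_ofReal]

end OTAux

section MixedToStdLemmas

open NumberField NumberField.InfinitePlace

variable {K : Type} [Field K] [NumberField K] {s t : ℕ}

open Classical in
lemma mixedToStd_apply (σc : Fin t → (K →+* ℂ))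
    (er : Fin s ≃ {w : InfinitePlace K // IsReal w})
    (ec : Fin t ≃ {w : InfinitePlace K // IsComplex w})
    (x : NumberField.mixedEmbedding.mixedSpace K) :
    mixedToStd σc er ec x = (fun i => x.1 (er i), fun j =>
      if embedding (ec j).1 = σc j then x.2 (ec j) else (starRingEnd ℂ) (x.2 (ec j))) := rfl

open Classical in
lemma mixedToStd_bijective (σc : Fin t → (K →+* ℂ))
    (er : Fin s ≃ {w : InfinitePlace K // IsReal w})
    (ec : Fin t ≃ {w : InfinitePlace K // IsComplex w}) :
    Function.Bijective (mixedToStd σc er ec) := by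
  constructor
  · intro x y h
    rw [mixedToStd_apply, mixedToStd_apply, Prod.mk.injEq] at h
    obtain ⟨h1, h2⟩ := h
    refine Prod.ext ?_ ?_ <;> funext w
    · have h3 := congrFun h1 (er.symm w)
      simpa using h3
    · have h3 := congrFun h2 (ec.symm w)
      simp only [Equiv.apply_symm_apply] at h3
      split_ifs at h3
      · exact h3
      · have h4 := congrArg (starRingEnd ℂ) h3
        simpa using h4
  · intro y
    refine ⟨(fun w => y.1 (er.symm w), fun w =>
      if embedding w.1 = σc (ec.symm w) then y.2 (ec.symm w)
      else (starRingEnd ℂ) (y.2 (ec.symm w))), ?_⟩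
    rw [mixedToStd_apply]
    refine Prod.ext ?_ ?_ <;> funext k
    · simp
    · simp only [Equiv.symm_apply_apply]
      split_ifs with hcond <;> simp

end MixedToStdLemmas

open NumberField.InfinitePlace

/-- Let `U ⊆ O_K^{*,+}` be admissible and let `Γ = U ⋉ O_K` act on
`ℍˢ × ℂᵗ`. Then the quotient topological space `(ℍˢ × ℂᵗ)/Γ` (the orbit space with the
quotient topology) is compact. -/
theorem otQuotient_compactSpace
    (K : Type) [Field K] [NumberField K] (s t : ℕ) (hs : 1 ≤ s) (ht : 1 ≤ t)
    (σr : Fin s → (K →+* ℝ)) (hσr : Function.Bijective σr)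
    (σc : Fin t → (K →+* ℂ)) (hσc : Function.Injective σc)
    (hσc_nonreal : ∀ j, ¬ ComplexEmbedding.IsReal (σc j))
    (hσc_nonconj : ∀ j k, ComplexEmbedding.conjugate (σc j) ≠ σc k)
    (hσc_exh : ∀ φ : K →+* ℂ, ¬ ComplexEmbedding.IsReal φ →
      ∃ j, σc j = φ ∨ ComplexEmbedding.conjugate (σc j) = φ)
    (U : Subgroup (𝓞 K)ˣ) (hU : Admissible σr U) :
    CompactSpace (Quot fun x y : {w : (Fin s → ℂ) × (Fin t → ℂ) // ∀ i, 0 < (w.1 i).im} =>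
      ∃ u ∈ U, ∃ a : 𝓞 K, otAct σr σc (u, a) x.val = y.val) := by
  classical
  obtain ⟨hUpos, -, hUdisc, hUspan⟩ := hU
  obtain ⟨er, her⟩ := exists_realPlacesEquiv σr hσr
  obtain ⟨ec, hec⟩ := exists_complexPlacesEquiv σc hσc hσc_nonreal hσc_nonconj hσc_exh
  set T := mixedToStd σc er ec with hTdef
  have hcomm : ∀ x : K, T (NumberField.mixedEmbedding K x) =
      ((fun i => σr i x, fun j => σc j x) : (Fin s → ℝ) × (Fin t → ℂ)) := by
    intro x
    refine Prod.ext ?_ ?_ <;> funext k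
    · show (NumberField.mixedEmbedding K x).1 (er k) = σr k x
      rw [NumberField.mixedEmbedding.mixedEmbedding_apply_isReal, her k]
    · show (if embedding (ec k).1 = σc k then (NumberField.mixedEmbedding K x).2 (ec k)
          else (starRingEnd ℂ) ((NumberField.mixedEmbedding K x).2 (ec k))) = σc k x
      rw [NumberField.mixedEmbedding.mixedEmbedding_apply_isComplex]
      split_ifs with h
      · rw [h]
      · rcases hec k with h' | h'
        · exact absurd h' h
        · rw [h', NumberField.ComplexEmbedding.conjugate_coe_eq, Complex.conj_conj]
  have hTbij : Function.Bijective T := mixedToStd_bijective σc er ec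
  let Te : NumberField.mixedEmbedding.mixedSpace K ≃ₗ[ℝ] ((Fin s → ℝ) × (Fin t → ℂ)) :=
    LinearEquiv.ofBijective T hTbij
  let nb : Module.Basis (Module.Free.ChooseBasisIndex ℤ (𝓞 K)) ℝ ((Fin s → ℝ) × (Fin t → ℂ)) :=
    (NumberField.mixedEmbedding.latticeBasis K).map Te
  have hnb_span : Submodule.span ℤ (Set.range nb) =
      Submodule.map (Te.toLinearMap.restrictScalars ℤ)
        (NumberField.mixedEmbedding.integerLattice K) := by
    have h1 : ∀ i, nb i = (Te.toLinearMap.restrictScalars ℤ)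
        ((NumberField.mixedEmbedding.latticeBasis K) i) := fun i => Module.Basis.map_apply _ _ _
    calc Submodule.span ℤ (Set.range nb)
        = Submodule.span ℤ (⇑(Te.toLinearMap.restrictScalars ℤ) ''
            Set.range (NumberField.mixedEmbedding.latticeBasis K)) := by
          rw [← Set.range_comp]
          exact congrArg _ (congrArg Set.range (funext h1))
      _ = Submodule.map (Te.toLinearMap.restrictScalars ℤ)
            (Submodule.span ℤ (Set.range (NumberField.mixedEmbedding.latticeBasis K))) :=
          (Submodule.map_span _ _).symm
      _ = _ := by rw [NumberField.mixedEmbedding.span_latticeBasis]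
  have hnb_mem : ∀ x : (Fin s → ℝ) × (Fin t → ℂ), x ∈ Submodule.span ℤ (Set.range nb) ↔
      ∃ a : 𝓞 K, ((fun i => σr i (a : K), fun j => σc j (a : K)) :
        (Fin s → ℝ) × (Fin t → ℂ)) = x := by
    intro x
    rw [hnb_span, Submodule.mem_map]
    constructor
    · rintro ⟨y, hy, rfl⟩
      obtain ⟨a, rfl⟩ := LinearMap.mem_range.mp hy
      exact ⟨a, (hcomm _).symm⟩
    · rintro ⟨a, rfl⟩
      exact ⟨NumberField.mixedEmbedding K (a : K), LinearMap.mem_range.mpr ⟨a, rfl⟩, hcomm _⟩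
  -- the lattice of logarithms of units
  let SU : AddSubgroup (Fin s → ℝ) :=
    { carrier := projLog σr '' (U : Set (𝓞 K)ˣ)
      add_mem' := by
        rintro a b ⟨u, hu, rfl⟩ ⟨v, hv, rfl⟩
        exact ⟨u * v, U.mul_mem hu hv, projLog_mul σr u v⟩
      zero_mem' := ⟨1, U.one_mem, projLog_one σr⟩
      neg_mem' := by
        rintro a ⟨u, hu, rfl⟩
        exact ⟨u⁻¹, U.inv_mem hu, projLog_inv σr u⟩ }
  let LU : Submodule ℤ (Fin s → ℝ) := AddSubgroup.toIntSubmodule SU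
  haveI hLUdisc : DiscreteTopology LU := hUdisc
  haveI hLUlat : IsZLattice ℝ LU := ⟨by
    show Submodule.span ℝ ((LU : Set (Fin s → ℝ))) = ⊤
    have h : (LU : Set (Fin s → ℝ)) = projLog σr '' (U : Set (𝓞 K)ˣ) := rfl
    rw [h]; exact hUspan⟩
  haveI := ZLattice.module_finite ℝ LU
  haveI := ZLattice.module_free ℝ LU
  let bZ := Module.Free.chooseBasis ℤ LU
  let bR := bZ.ofZLatticeBasis ℝ LU
  set R1 : ℝ := ∑ i, ‖bR i‖ with hR1
  set R2 : ℝ := ∑ i, ‖nb i‖ with hR2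
  have hR1nn : 0 ≤ R1 := Finset.sum_nonneg fun i _ => norm_nonneg _
  have hR2nn : 0 ≤ R2 := Finset.sum_nonneg fun i _ => norm_nonneg _
  set M : ℝ := R2 + Real.exp R1 with hM
  have hMnn : 0 ≤ M := by positivity
  set C : Set ((Fin s → ℂ) × (Fin t → ℂ)) :=
    Metric.closedBall 0 M ∩ {w | ∀ i, Real.exp (-R1) ≤ (w.1 i).im} with hC
  have hCsub : ∀ w ∈ C, ∀ i, 0 < (w.1 i).im := fun w hw i =>
    lt_of_lt_of_le (Real.exp_pos _) (hw.2 i)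
  have hCcomp : IsCompact C := by
    refine (isCompact_closedBall 0 M).inter_right ?_
    rw [show {w : (Fin s → ℂ) × (Fin t → ℂ) | ∀ i, Real.exp (-R1) ≤ (w.1 i).im} =
        ⋂ i, {w : (Fin s → ℂ) × (Fin t → ℂ) | Real.exp (-R1) ≤ (w.1 i).im} from by
      ext w; simp]
    exact isClosed_iInter fun i => isClosed_le continuous_const
      (Complex.continuous_im.comp ((continuous_apply i).comp continuous_fst))
  -- the key step: every orbit meets C
  have key : ∀ z : {w : (Fin s → ℂ) × (Fin t → ℂ) // ∀ i, 0 < (w.1 i).im},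
      ∃ p ∈ C, ∃ u ∈ U, ∃ a : 𝓞 K, otAct σr σc (u, a) z.val = p := by
    intro z
    set w0 : Fin s → ℝ := fun i => Real.log ((z.val.1 i).im) with hw0
    set d1 : Fin s → ℝ := ZSpan.fract bR w0 with hd1
    have hfloor : w0 - d1 ∈ LU := by
      have h1 : w0 - d1 = (ZSpan.floor bR w0 : Fin s → ℝ) := by
        show w0 - ZSpan.fract bR w0 = (ZSpan.floor bR w0 : Fin s → ℝ)
        rw [ZSpan.fract_apply, sub_sub_cancel]
      rw [h1]
      exact (SetLike.ext_iff.mp (bZ.ofZLatticeBasis_span ℝ) _).mp (SetLike.coe_mem _)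
    have hfloor' : w0 - d1 ∈ projLog σr '' (U : Set (𝓞 K)ˣ) := hfloor
    obtain ⟨u0, hu0U, hu0⟩ := hfloor'
    set u : (𝓞 K)ˣ := u0⁻¹ with hu
    have huU : u ∈ U := U.inv_mem hu0U
    have hprojU : projLog σr u = d1 - w0 := by
      rw [hu, projLog_inv σr u0, hu0, neg_sub]
    have hupos : ∀ i, 0 < σr i ((u : 𝓞 K) : K) := fun i => hUpos huU i
    have him : ∀ i, σr i ((u : 𝓞 K) : K) * (z.val.1 i).im = Real.exp (d1 i) := by
      intro i
      have hy : 0 < σr i ((u : 𝓞 K) : K) * (z.val.1 i).im := mul_pos (hupos i) (z.prop i)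
      have hlog : Real.log (σr i ((u : 𝓞 K) : K) * (z.val.1 i).im) = d1 i := by
        rw [Real.log_mul (ne_of_gt (hupos i)) (ne_of_gt (z.prop i))]
        have h5 : Real.log (σr i ((u : 𝓞 K) : K)) = projLog σr u i := by
          show Real.log (σr i ((u : 𝓞 K) : K)) = Real.log |σr i ((u : 𝓞 K) : K)|
          rw [abs_of_pos (hupos i)]
        rw [h5, hprojU]
        show d1 i - w0 i + Real.log ((z.val.1 i).im) = d1 i
        rw [hw0]
        ring
      rw [← hlog, Real.exp_log hy]
    set v1 : Fin s → ℝ := fun i => σr i ((u : 𝓞 K) : K) * (z.val.1 i).re with hv1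
    set v2 : Fin t → ℂ := fun j => (σc j ((u : 𝓞 K) : K)) * z.val.2 j with hv2
    set d2 := ZSpan.fract nb (v1, v2) with hd2
    have hfloor2 : ∃ a0 : 𝓞 K, ((fun i => σr i (a0 : K), fun j => σc j (a0 : K)) :
        (Fin s → ℝ) × (Fin t → ℂ)) = (v1, v2) - d2 := by
      apply (hnb_mem _).mp
      have h1 : (v1, v2) - d2 = (ZSpan.floor nb (v1, v2) : (Fin s → ℝ) × (Fin t → ℂ)) := by
        show (v1, v2) - ZSpan.fract nb (v1, v2) = (ZSpan.floor nb (v1, v2) : _ × _)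
        rw [ZSpan.fract_apply, sub_sub_cancel]
      rw [h1]
      exact SetLike.coe_mem _
    obtain ⟨a0, ha0⟩ := hfloor2
    set a : 𝓞 K := -a0 with ha
    have hacoe : ((a : 𝓞 K) : K) = -((a0 : 𝓞 K) : K) := by rw [ha]; push_cast; ring
    have hra : ∀ i, σr i ((a : 𝓞 K) : K) = d2.1 i - v1 i := by
      intro i
      have h6 := congrFun (congrArg Prod.fst ha0) i
      simp only [Prod.fst_sub, Pi.sub_apply] at h6
      rw [hacoe, map_neg, h6]
      ring
    have hca : ∀ j, σc j ((a : 𝓞 K) : K) = d2.2 j - v2 j := by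
      intro j
      have h6 := congrFun (congrArg Prod.snd ha0) j
      simp only [Prod.snd_sub, Pi.sub_apply] at h6
      rw [hacoe, map_neg, h6]
      ring
    refine ⟨otAct σr σc (u, a) z.val, ?_, u, huU, a, rfl⟩
    have hre : ∀ i, ((otAct σr σc (u, a) z.val).1 i).re = d2.1 i := by
      intro i
      show ((σr i ((u : 𝓞 K) : K) : ℂ) * z.val.1 i + (σr i ((a : 𝓞 K) : K) : ℂ)).re = d2.1 i
      simp only [Complex.add_re, Complex.mul_re, Complex.ofReal_re, Complex.ofReal_im,
        zero_mul, sub_zero]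
      rw [hra i, hv1]
      ring
    have him' : ∀ i, ((otAct σr σc (u, a) z.val).1 i).im = Real.exp (d1 i) := by
      intro i
      show ((σr i ((u : 𝓞 K) : K) : ℂ) * z.val.1 i + (σr i ((a : 𝓞 K) : K) : ℂ)).im
        = Real.exp (d1 i)
      simp only [Complex.add_im, Complex.mul_im, Complex.ofReal_re, Complex.ofReal_im,
        zero_mul, add_zero]
      exact him i
    have hcc : ∀ j, (otAct σr σc (u, a) z.val).2 j = d2.2 j := by
      intro j
      show σc j ((u : 𝓞 K) : K) * z.val.2 j + σc j ((a : 𝓞 K) : K) = d2.2 j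
      rw [hca j, hv2]
      ring
    have hd1b : ∀ i, |d1 i| ≤ R1 := by
      intro i
      calc |d1 i| = ‖d1 i‖ := (Real.norm_eq_abs _).symm
        _ ≤ ‖d1‖ := norm_le_pi_norm d1 i
        _ ≤ R1 := ZSpan.norm_fract_le bR w0
    have hd2b : ‖d2‖ ≤ R2 := ZSpan.norm_fract_le nb (v1, v2)
    have hd2b1 : ∀ i, |d2.1 i| ≤ R2 := by
      intro i
      calc |d2.1 i| = ‖d2.1 i‖ := (Real.norm_eq_abs _).symm
        _ ≤ ‖d2.1‖ := norm_le_pi_norm d2.1 i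
        _ ≤ ‖d2‖ := norm_fst_le d2
        _ ≤ R2 := hd2b
    have hd2b2 : ∀ j, ‖d2.2 j‖ ≤ R2 := by
      intro j
      calc ‖d2.2 j‖ ≤ ‖d2.2‖ := norm_le_pi_norm d2.2 j
        _ ≤ ‖d2‖ := norm_snd_le d2
        _ ≤ R2 := hd2b
    constructor
    · rw [Metric.mem_closedBall, dist_zero_right, Prod.norm_def]
      apply max_le
      · rw [pi_norm_le_iff_of_nonneg hMnn]
        intro i
        calc ‖(otAct σr σc (u, a) z.val).1 i‖
            ≤ |((otAct σr σc (u, a) z.val).1 i).re| + |((otAct σr σc (u, a) z.val).1 i).im| :=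
              Complex.norm_le_abs_re_add_abs_im _
          _ ≤ R2 + Real.exp R1 := by
              apply add_le_add
              · rw [hre i]; exact hd2b1 i
              · rw [him' i, abs_of_pos (Real.exp_pos _)]
                exact Real.exp_le_exp.mpr (le_of_abs_le (hd1b i))
          _ = M := hM.symm
      · rw [pi_norm_le_iff_of_nonneg hMnn]
        intro j
        rw [hcc j]
        calc ‖d2.2 j‖ ≤ R2 := hd2b2 j
          _ ≤ M := by rw [hM]; have := Real.exp_pos R1; linarith
    · show ∀ i, Real.exp (-R1) ≤ ((otAct σr σc (u, a) z.val).1 i).im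
      intro i
      rw [him' i]
      exact Real.exp_le_exp.mpr (neg_le_of_abs_le (hd1b i))
  -- wrap up: the quotient is the continuous image of a compact set
  refine ⟨?_⟩
  set Hs := {w : (Fin s → ℂ) × (Fin t → ℂ) // ∀ i, 0 < (w.1 i).im} with hHs
  set rel : Hs → Hs → Prop :=
    fun x y => ∃ u ∈ U, ∃ a : 𝓞 K, otAct σr σc (u, a) x.val = y.val with hrel
  have hcomp : IsCompact (Subtype.val ⁻¹' C : Set Hs) := by
    have himg : Subtype.val '' (Subtype.val ⁻¹' C : Set Hs) = C := by
      rw [Set.image_preimage_eq_inter_range, Subtype.range_coe_subtype]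
      exact Set.inter_eq_self_of_subset_left (fun w hw => hCsub w hw)
    rw [Subtype.isCompact_iff, himg]
    exact hCcomp
  have hmap : Quot.mk rel '' (Subtype.val ⁻¹' C : Set Hs) = Set.univ := by
    refine Set.eq_univ_of_forall ?_
    intro q
    refine Quot.ind ?_ q
    intro z
    obtain ⟨p, hpC, u, huU, a, hact⟩ := key z
    exact ⟨⟨p, hCsub p hpC⟩, hpC, (Quot.sound ⟨u, huU, a, hact⟩).symm⟩
  rw [← hmap]
  exact hcomp.image continuous_quot_mk

end
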